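/- Let S be a monoid, λ a nonzero cardinal, n ≤ λ a positive integer, and i ≤ n. Let x be the element of 𝓘_λ^n(S) with rows (a₁,…,a_i), (s₁,…,s_i), (b₁,…,b_i) and y the element with rows (c₁,…,c_i), (t₁,…,t_i), (d₁,…,d_i), both nonzero. Then x 𝓓 y in 𝓘_λ^n(S) if and only if there exists a permutation σ of {1,…,i} such that s_j 𝓓 t_{σ(j)} in S for all j = 1,…,i. -/
import Mathlib


open Classical

namespace ISemExt

/-- Carrier for the extension `𝓘_λ^n(S)`: an element is a function assigning to each
pair `(x,y)` of points of `lam` an optional value in `S` (its labelled graph). -/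
def Elem (lam S : Type) : Type := lam → lam → Option S

/-- The zero element (the empty map). -/
def zeroE (lam S : Type) : Elem lam S := fun _ _ => none

/-- Multiplication in `𝓘_λ^n(S)`: composition of labelled partial maps,
multiplying the labels along composable pairs. -/
noncomputable def mulE {lam S : Type} [Mul S] (f g : Elem lam S) : Elem lam S :=
  fun x z =>
    if h : ∃ y s t, f x y = some s ∧ g y z = some t then
      some (h.choose_spec.choose * h.choose_spec.choose_spec.choose)
    else none

/-- The graph of an element. -/
def graphOf {lam S : Type} (f : Elem lam S) : Set (lam × lam) :=
  {p | (f p.1 p.2).isSome}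

/-- `Valid n f` says that `f` is an element of `𝓘_λ^n(S)`: it is a partial
injective labelled map (in both directions) of rank at most `n`. -/
def Valid {lam S : Type} (n : ℕ) (f : Elem lam S) : Prop :=
  (∀ ⦃x y₁ y₂⦄, (f x y₁).isSome → (f x y₂).isSome → y₁ = y₂) ∧
  (∀ ⦃x₁ x₂ y⦄, (f x₁ y).isSome → (f x₂ y).isSome → x₁ = x₂) ∧
  (graphOf f).Finite ∧ (graphOf f).ncard ≤ n

/-- The element with rows `(a₁,…,a_i)`, `(s₁,…,s_i)`, `(b₁,…,b_i)`. -/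
noncomputable def mk3 {lam S : Type} {i : ℕ} (a : Fin i → lam) (s : Fin i → S)
    (b : Fin i → lam) : Elem lam S :=
  fun x y => if h : ∃ j, a j = x ∧ b j = y then some (s h.choose) else none

/-- Green's relation `𝓡` in the monoid `S`. -/
def GreenRS {S : Type} [Monoid S] (x y : S) : Prop :=
  (∃ u, x = y * u) ∧ (∃ v, y = x * v)

/-- Green's relation `𝓛` in the monoid `S`. -/
def GreenLS {S : Type} [Monoid S] (x y : S) : Prop :=
  (∃ u, x = u * y) ∧ (∃ v, y = v * x)

/-- Green's relation `𝓓 = 𝓡 ∘ 𝓛` in the monoid `S`. -/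
def GreenDS {S : Type} [Monoid S] (x y : S) : Prop :=
  ∃ z : S, GreenRS x z ∧ GreenLS z y

/-- Green's relation `𝓡` in the semigroup `𝓘_λ^n(S)` (with identity adjoined). -/
def GreenRI {lam S : Type} [Mul S] (n : ℕ) (f g : Elem lam S) : Prop :=
  (f = g ∨ ∃ u : Elem lam S, Valid n u ∧ f = mulE g u) ∧
  (g = f ∨ ∃ v : Elem lam S, Valid n v ∧ g = mulE f v)

/-- Green's relation `𝓛` in the semigroup `𝓘_λ^n(S)` (with identity adjoined). -/
def GreenLI {lam S : Type} [Mul S] (n : ℕ) (f g : Elem lam S) : Prop :=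
  (f = g ∨ ∃ u : Elem lam S, Valid n u ∧ f = mulE u g) ∧
  (g = f ∨ ∃ v : Elem lam S, Valid n v ∧ g = mulE v f)

/-- Green's relation `𝓓 = 𝓡 ∘ 𝓛` in the semigroup `𝓘_λ^n(S)`. -/
def GreenDI {lam S : Type} [Mul S] (n : ℕ) (f g : Elem lam S) : Prop :=
  ∃ h : Elem lam S, Valid n h ∧ GreenRI n f h ∧ GreenLI n h g


section Aux

variable {lam S : Type}

lemma mk3_apply {i : ℕ} {a : Fin i → lam} {s : Fin i → S} {b : Fin i → lam}
    (ha : Function.Injective a) (j : Fin i) :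
    mk3 a s b (a j) (b j) = some (s j) := by
  have hex : ∃ k, a k = a j ∧ b k = b j := ⟨j, rfl, rfl⟩
  have hch : hex.choose = j := ha hex.choose_spec.1
  simp only [mk3, dif_pos hex, hch]

lemma mk3_some {i : ℕ} {a : Fin i → lam} {s : Fin i → S} {b : Fin i → lam}
    {x y : lam} {v : S} (h : mk3 a s b x y = some v) :
    ∃ j, a j = x ∧ b j = y ∧ s j = v := by
  by_cases hex : ∃ k, a k = x ∧ b k = y
  · refine ⟨hex.choose, hex.choose_spec.1, hex.choose_spec.2, ?_⟩
    have := h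
    simp only [mk3, dif_pos hex, Option.some_inj] at this
    exact this
  · simp only [mk3, dif_neg hex] at h
    exact absurd h (by simp)

lemma mk3_none {i : ℕ} {a : Fin i → lam} {s : Fin i → S} {b : Fin i → lam}
    {x y : lam} (hex : ¬ ∃ k, a k = x ∧ b k = y) :
    mk3 a s b x y = none := by
  simp only [mk3, dif_neg hex]

lemma mk3_inj_right {i : ℕ} {a : Fin i → lam} {s : Fin i → S} {b : Fin i → lam}
    (ha : Function.Injective a) :
    ∀ ⦃x y₁ y₂⦄, (mk3 a s b x y₁).isSome → (mk3 a s b x y₂).isSome → y₁ = y₂ := by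
  intro x y₁ y₂ h1 h2
  obtain ⟨v1, hv1⟩ := Option.isSome_iff_exists.mp h1
  obtain ⟨v2, hv2⟩ := Option.isSome_iff_exists.mp h2
  obtain ⟨j1, hj1, hj1', -⟩ := mk3_some hv1
  obtain ⟨j2, hj2, hj2', -⟩ := mk3_some hv2
  rw [← hj1', ← hj2']
  exact congrArg b (ha (hj1.trans hj2.symm))

lemma mk3_inj_left {i : ℕ} {a : Fin i → lam} {s : Fin i → S} {b : Fin i → lam}
    (hb : Function.Injective b) :
    ∀ ⦃x₁ x₂ y⦄, (mk3 a s b x₁ y).isSome → (mk3 a s b x₂ y).isSome → x₁ = x₂ := by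
  intro x₁ x₂ y h1 h2
  obtain ⟨v1, hv1⟩ := Option.isSome_iff_exists.mp h1
  obtain ⟨v2, hv2⟩ := Option.isSome_iff_exists.mp h2
  obtain ⟨j1, hj1, hj1', -⟩ := mk3_some hv1
  obtain ⟨j2, hj2, hj2', -⟩ := mk3_some hv2
  rw [← hj1, ← hj2]
  exact congrArg a (hb (hj1'.trans hj2'.symm))

lemma graphOf_mk3 {i : ℕ} {a : Fin i → lam} {s : Fin i → S} {b : Fin i → lam} :
    graphOf (mk3 a s b) = Set.range (fun j => (a j, b j)) := by
  ext ⟨x, y⟩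
  have hiff : (mk3 a s b x y).isSome ↔ ∃ k, a k = x ∧ b k = y := by
    constructor
    · intro h
      by_contra hex
      rw [mk3_none hex] at h
      simp at h
    · intro hex
      simp [mk3, dif_pos hex]
  simp only [graphOf, Set.mem_setOf_eq, hiff, Set.mem_range, Prod.mk.injEq]

lemma valid_mk3 {n i : ℕ} {a : Fin i → lam} {s : Fin i → S} {b : Fin i → lam}
    (ha : Function.Injective a) (hb : Function.Injective b) (hin : i ≤ n) :
    Valid n (mk3 a s b) := by
  refine ⟨mk3_inj_right ha, mk3_inj_left hb, ?_, ?_⟩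
  · rw [graphOf_mk3]
    exact Set.finite_range _
  · rw [graphOf_mk3, ← Set.image_univ]
    calc ((fun j => (a j, b j)) '' Set.univ).ncard
        ≤ (Set.univ : Set (Fin i)).ncard := Set.ncard_image_le Set.finite_univ
      _ = i := by simp [Set.ncard_univ]
      _ ≤ n := hin

lemma mulE_eval [Mul S] {f g : Elem lam S}
    (hf : ∀ ⦃x y₁ y₂⦄, (f x y₁).isSome → (f x y₂).isSome → y₁ = y₂)
    {x y z : lam} {u v : S} (h1 : f x y = some u) (h2 : g y z = some v) :
    mulE f g x z = some (u * v) := by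
  have hex : ∃ y' s t, f x y' = some s ∧ g y' z = some t := ⟨y, u, v, h1, h2⟩
  have hfs := hex.choose_spec.choose_spec.choose_spec.1
  have hy : hex.choose = y := hf (by rw [hfs]; rfl) (by rw [h1]; rfl)
  have h1' : some hex.choose_spec.choose = some u := by
    rw [← hex.choose_spec.choose_spec.choose_spec.1, hy]; exact h1
  have h2' : some hex.choose_spec.choose_spec.choose = some v := by
    rw [← hex.choose_spec.choose_spec.choose_spec.2, hy]; exact h2
  simp only [mulE, dif_pos hex]
  exact congrArg some (congrArg₂ (· * ·) (Option.some_inj.mp h1') (Option.some_inj.mp h2'))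

lemma mulE_some [Mul S] {f g : Elem lam S} {x z : lam} {w : S}
    (h : mulE f g x z = some w) :
    ∃ y u v, f x y = some u ∧ g y z = some v ∧ w = u * v := by
  by_cases hex : ∃ y s t, f x y = some s ∧ g y z = some t
  · refine ⟨hex.choose, hex.choose_spec.choose, hex.choose_spec.choose_spec.choose,
      hex.choose_spec.choose_spec.choose_spec.1,
      hex.choose_spec.choose_spec.choose_spec.2, ?_⟩
    simp only [mulE, dif_pos hex, Option.some_inj] at h
    exact h.symm
  · simp only [mulE, dif_neg hex] at h
    exact absurd h (by simp)

lemma mulE_none [Mul S] {f g : Elem lam S} {x z : lam}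
    (hex : ¬ ∃ y s t, f x y = some s ∧ g y z = some t) :
    mulE f g x z = none := by
  simp only [mulE, dif_neg hex]

lemma mulE_mk3_mk3 [Mul S] {i : ℕ} {a e b : Fin i → lam} {z u : Fin i → S}
    (ha : Function.Injective a) (he : Function.Injective e) :
    mulE (mk3 a z e) (mk3 e u b) = mk3 a (fun j => z j * u j) b := by
  funext x y
  by_cases hex : ∃ j, a j = x ∧ b j = y
  · obtain ⟨j, rfl, rfl⟩ := hex
    rw [mulE_eval (mk3_inj_right ha) (mk3_apply ha j) (mk3_apply he j), mk3_apply ha j]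
  · rw [mk3_none hex]
    apply mulE_none
    rintro ⟨m, s', t', hs', ht'⟩
    obtain ⟨j1, hj1a, hj1e, -⟩ := mk3_some hs'
    obtain ⟨j2, hj2e, hj2b, -⟩ := mk3_some ht'
    exact hex ⟨j1, hj1a, by rw [he (hj1e.trans hj2e.symm)]; exact hj2b⟩

lemma mk3_reindex {i : ℕ} {a b : Fin i → lam} {s : Fin i → S}
    (ha : Function.Injective a) (σ : Equiv.Perm (Fin i)) :
    mk3 (a ∘ σ) (s ∘ σ) (b ∘ σ) = mk3 a s b := by
  funext x y
  by_cases hex : ∃ j, a j = x ∧ b j = y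
  · obtain ⟨j, rfl, rfl⟩ := hex
    have h1 := mk3_apply (a := a ∘ σ) (s := s ∘ σ) (b := b ∘ σ)
      (ha.comp σ.injective) (σ.symm j)
    simp only [Function.comp_apply, Equiv.apply_symm_apply] at h1
    rw [h1, mk3_apply ha j]
  · rw [mk3_none hex]
    exact mk3_none (by rintro ⟨j, h1, h2⟩; exact hex ⟨σ j, h1, h2⟩)

lemma R_struct [Monoid S] {n : ℕ} {f h : Elem lam S}
    (hf : ∀ ⦃x y₁ y₂⦄, (f x y₁).isSome → (f x y₂).isSome → y₁ = y₂)
    (hR : GreenRI n f h) {x y : lam} {s : S} (hfx : f x y = some s) :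
    ∃ y' z, h x y' = some z ∧ GreenRS s z := by
  rcases hR.1 with heq | ⟨u, -, hfu⟩
  · exact ⟨y, s, by rw [← heq]; exact hfx, ⟨1, (mul_one s).symm⟩, ⟨1, (mul_one s).symm⟩⟩
  · have hfx' := hfx
    rw [hfu] at hfx'
    obtain ⟨y₀, z, t, hhz, hut, hst⟩ := mulE_some hfx'
    refine ⟨y₀, z, hhz, ⟨t, hst⟩, ?_⟩
    rcases hR.2 with heq | ⟨v, -, hhv⟩
    · have hfz : f x y₀ = some z := by rw [← heq]; exact hhz
      have hy : y₀ = y := hf (by rw [hfz]; rfl) (by rw [hfx]; rfl)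
      rw [hy, hfx] at hfz
      exact ⟨1, by rw [← Option.some_inj.mp hfz, mul_one]⟩
    · have hhz' := hhz
      rw [hhv] at hhz'
      obtain ⟨y₁, s₁, t₁, hfs₁, hvt₁, hz⟩ := mulE_some hhz'
      have hy : y₁ = y := hf (by rw [hfs₁]; rfl) (by rw [hfx]; rfl)
      rw [hy, hfx] at hfs₁
      exact ⟨t₁, by rw [hz, ← Option.some_inj.mp hfs₁]⟩

lemma L_struct [Monoid S] {n : ℕ} {h g : Elem lam S}
    (hh : ∀ ⦃x₁ x₂ y⦄, (h x₁ y).isSome → (h x₂ y).isSome → x₁ = x₂)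
    (hL : GreenLI n h g) {x y : lam} {z : S} (hhx : h x y = some z) :
    ∃ x' w, g x' y = some w ∧ GreenLS z w := by
  rcases hL.1 with heq | ⟨u, -, hhu⟩
  · exact ⟨x, z, by rw [← heq]; exact hhx, ⟨1, (one_mul z).symm⟩, ⟨1, (one_mul z).symm⟩⟩
  · have hhx' := hhx
    rw [hhu] at hhx'
    obtain ⟨m, s₁, w, hus₁, hgw, hz⟩ := mulE_some hhx'
    refine ⟨m, w, hgw, ⟨s₁, hz⟩, ?_⟩
    rcases hL.2 with heq | ⟨v, -, hgv⟩
    · have hhw : h m y = some w := by rw [← heq]; exact hgw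
      have hm : m = x := hh (by rw [hhw]; rfl) (by rw [hhx]; rfl)
      rw [hm, hhx] at hhw
      exact ⟨1, by rw [← Option.some_inj.mp hhw, one_mul]⟩
    · have hgw' := hgw
      rw [hgv] at hgw'
      obtain ⟨m', s₂, t₂, hvs₂, hht₂, hw⟩ := mulE_some hgw'
      have hm : m' = x := hh (by rw [hht₂]; rfl) (by rw [hhx]; rfl)
      rw [hm, hhx] at hht₂
      exact ⟨s₂, by rw [hw, ← Option.some_inj.mp hht₂]⟩

end Aux

/-- Characterization of Green's relation `𝓓` on `𝓘_λ^n(S)` for a monoid `S`. -/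
theorem greenD_iff (lam S : Type) [Nonempty lam] [Monoid S]
    (n i : ℕ) (hn : 0 < n) (hcard : (n : Cardinal) ≤ Cardinal.mk lam)
    (hi : 0 < i) (hin : i ≤ n)
    (a b c d : Fin i → lam) (s t : Fin i → S)
    (ha : Function.Injective a) (hb : Function.Injective b)
    (hc : Function.Injective c) (hd : Function.Injective d) :
    GreenDI n (mk3 a s b) (mk3 c t d) ↔
      ∃ σ : Equiv.Perm (Fin i), ∀ j, GreenDS (s j) (t (σ j)) := by
  constructor
  · rintro ⟨h, hhval, hR, hL⟩
    have step1 : ∀ j : Fin i, ∃ y' z, h (a j) y' = some z ∧ GreenRS (s j) z :=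
      fun j => R_struct (mk3_inj_right ha) hR (mk3_apply ha j)
    choose e z he hz using step1
    have step2 : ∀ j : Fin i, ∃ x' w, mk3 c t d x' (e j) = some w ∧ GreenLS (z j) w :=
      fun j => L_struct hhval.2.1 hL (he j)
    choose x' w hgw hzw using step2
    have step3 : ∀ j, ∃ k, c k = x' j ∧ d k = e j ∧ t k = w j :=
      fun j => mk3_some (hgw j)
    choose σ0 hσc hσd hσt using step3
    have hinj : Function.Injective σ0 := by
      intro j j' hjj
      have hed : e j = e j' := by rw [← hσd j, ← hσd j', hjj]
      have haa : a j = a j' :=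
        hhval.2.1 (by rw [he j]; rfl) (by rw [hed, he j']; rfl)
      exact ha haa
    refine ⟨Equiv.ofBijective σ0 (Finite.injective_iff_bijective.mp hinj), fun j => ?_⟩
    refine ⟨z j, hz j, ?_⟩
    show GreenLS (z j) (t (σ0 j))
    rw [hσt j]
    exact hzw j
  · rintro ⟨σ, hσ⟩
    have hσ' : ∀ j, ∃ z, GreenRS (s j) z ∧ GreenLS z (t (σ j)) := hσ
    choose z hzR hzL using hσ'
    choose u hu using fun j => (hzR j).1
    choose v hv using fun j => (hzR j).2
    choose p hp using fun j => (hzL j).1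
    choose q hq using fun j => (hzL j).2
    have heinj : Function.Injective (d ∘ σ) := hd.comp σ.injective
    refine ⟨mk3 a z (d ∘ σ), valid_mk3 ha heinj hin, ⟨?_, ?_⟩, ⟨?_, ?_⟩⟩
    · right
      refine ⟨mk3 (d ∘ σ) u b, valid_mk3 heinj hb hin, ?_⟩
      rw [mulE_mk3_mk3 ha heinj]
      have hs : (fun j => z j * u j) = s := by funext j; exact (hu j).symm
      rw [hs]
    · right
      refine ⟨mk3 b v (d ∘ σ), valid_mk3 hb heinj hin, ?_⟩
      rw [mulE_mk3_mk3 ha hb]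
      have hs : (fun j => s j * v j) = z := by funext j; exact (hv j).symm
      rw [hs]
    · right
      refine ⟨mk3 a p (c ∘ σ), valid_mk3 ha (hc.comp σ.injective) hin, ?_⟩
      rw [← mk3_reindex hc σ, mulE_mk3_mk3 ha (hc.comp σ.injective)]
      have hs : (fun j => p j * (t ∘ σ) j) = z := by
        funext j; exact (hp j).symm
      rw [hs]
    · right
      refine ⟨mk3 c (fun k => q (σ.symm k)) (a ∘ σ.symm),
        valid_mk3 hc (ha.comp σ.symm.injective) hin, ?_⟩
      rw [← mk3_reindex ha σ.symm, mulE_mk3_mk3 hc (ha.comp σ.symm.injective)]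
      have h1 : ((d ∘ σ) ∘ σ.symm) = d := by
        funext k; simp
      have h2 : (fun j => (fun k => q (σ.symm k)) j * (z ∘ σ.symm) j) = t := by
        funext k
        simp only [Function.comp_apply]
        have := hq (σ.symm k)
        rw [Equiv.apply_symm_apply] at this
        exact this.symm
      rw [h1, h2]

end ISemExt
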